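/- Let f(x) = ν r x - ν μ x^((ν+1)/ν) - s with r, μ, ν > 0. If 0 < s < (1/μ^ν)·(νr/(ν+1))^(ν+1), then f has exactly two positive roots A and K with 0 < A < K; moreover at the critical value s* = (1/μ^ν)·(νr/(ν+1))^(ν+1) the two roots coalesce at x* = (νr/(μ(ν+1)))^ν, where simultaneously f(x*) = 0 and f'(x*) = 0. -/

import Mathlib

open Real

theorem model2_two_roots_and_fold (r μ ν : ℝ) (hr : 0 < r) (hμ : 0 < μ) (hν : 0 < ν) :
    (∀ s : ℝ, 0 < s → s < (1 / μ ^ ν) * (ν * r / (ν + 1)) ^ (ν + 1) →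
      ∃ A K : ℝ, 0 < A ∧ A < K ∧
        ν * r * A - ν * μ * A ^ ((ν + 1) / ν) - s = 0 ∧
        ν * r * K - ν * μ * K ^ ((ν + 1) / ν) - s = 0 ∧
        ∀ x : ℝ, 0 < x → ν * r * x - ν * μ * x ^ ((ν + 1) / ν) - s = 0 → x = A ∨ x = K) ∧
    (ν * r * (ν * r / (μ * (ν + 1))) ^ ν
        - ν * μ * ((ν * r / (μ * (ν + 1))) ^ ν) ^ ((ν + 1) / ν)
        - (1 / μ ^ ν) * (ν * r / (ν + 1)) ^ (ν + 1) = 0 ∧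
      HasDerivAt
        (fun x : ℝ => ν * r * x - ν * μ * x ^ ((ν + 1) / ν)
          - (1 / μ ^ ν) * (ν * r / (ν + 1)) ^ (ν + 1))
        0 ((ν * r / (μ * (ν + 1))) ^ ν)) := by
  have hν1 : (0:ℝ) < ν + 1 := by linarith
  set c : ℝ := (ν + 1) / ν with hc
  have hc1 : 1 < c := by
    rw [hc, lt_div_iff₀ hν]; linarith
  have hc0 : 0 < c := by linarith
  have hc' : c = 1 + 1 / ν := by
    rw [hc]; field_simp
  have hcm : ν * c = ν + 1 := by
    rw [hc]; field_simp
  set y : ℝ := ν * r / (μ * (ν + 1)) with hy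
  have hy0 : 0 < y := by positivity
  set xs : ℝ := y ^ ν with hxs
  have hxs0 : 0 < xs := rpow_pos_of_pos hy0 ν
  have hxsy : xs ^ (1 / ν) = y := by
    rw [hxs, one_div, Real.rpow_rpow_inv hy0.le hν.ne']
  have hkey : (ν + 1) * μ * y = ν * r := by
    rw [hy]; field_simp
  set sstar : ℝ := (1 / μ ^ ν) * (ν * r / (ν + 1)) ^ (ν + 1) with hsstar
  -- value at xs
  have hpow_split : ∀ x : ℝ, 0 < x → x ^ c = x * x ^ (1 / ν) := by
    intro x hx
    rw [hc', Real.rpow_add hx, Real.rpow_one]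
  have hfxs : ν * r * xs - ν * μ * xs ^ c = sstar := by
    rw [hpow_split xs hxs0, hxsy]
    have h3 : xs = (ν * r / (ν + 1)) ^ ν / μ ^ ν := by
      rw [hxs]
      have : y = (ν * r / (ν + 1)) / μ := by rw [hy]; field_simp
      rw [this, Real.div_rpow (by positivity) hμ.le]
    have h4 : (ν * r / (ν + 1)) ^ (ν + 1) = (ν * r / (ν + 1)) ^ ν * (ν * r / (ν + 1)) := by
      rw [Real.rpow_add (by positivity : (0:ℝ) < ν * r / (ν + 1)) ν 1, Real.rpow_one]
    have hμν : (0:ℝ) < μ ^ ν := rpow_pos_of_pos hμ ν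
    rw [hsstar, h3, h4]
    field_simp
    rw [hy]
    field_simp
    ring
  -- derivative
  have hderiv : ∀ s x : ℝ, x ≠ 0 →
      HasDerivAt (fun x : ℝ => ν * r * x - ν * μ * x ^ c - s)
        (ν * r - (ν + 1) * μ * x ^ (1 / ν)) x := by
    intro s x hx
    have h1 : HasDerivAt (fun x : ℝ => x ^ c) (c * x ^ (c - 1)) x :=
      Real.hasDerivAt_rpow_const (Or.inl hx)
    have h2 := (((hasDerivAt_id x).const_mul (ν * r)).sub (h1.const_mul (ν * μ))).sub_const s
    convert h2 using 1
    · rfl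
    · rfl
    · rfl
    have : c - 1 = 1 / ν := by rw [hc']; ring
    rw [this]
    have : ν * μ * (c * x ^ (1 / ν)) = (ν * c) * μ * x ^ (1 / ν) := by ring
    rw [this, hcm]
    ring
  -- continuity
  have hcont : ∀ s : ℝ, Continuous (fun x : ℝ => ν * r * x - ν * μ * x ^ c - s) := by
    intro s
    have hcp : Continuous fun x : ℝ => x ^ c := by
      rw [continuous_iff_continuousAt]
      exact fun x => Real.continuousAt_rpow_const x c (Or.inr hc0.le)
    exact (((continuous_const.mul continuous_id).sub (continuous_const.mul hcp)).sub continuous_const)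
  constructor
  · intro s hs hss
    set f : ℝ → ℝ := fun x : ℝ => ν * r * x - ν * μ * x ^ c - s with hf
    have hf0 : f 0 = -s := by
      simp [hf, Real.zero_rpow hc0.ne']
    have hfxs' : f xs = sstar - s := by
      show ν * r * xs - ν * μ * xs ^ c - s = sstar - s
      linarith [hfxs]
    have hfxspos : 0 < f xs := by rw [hfxs']; linarith
    -- monotonicity
    have hmono : StrictMonoOn f (Set.Icc 0 xs) := by
      apply strictMonoOn_of_deriv_pos (convex_Icc 0 xs) ((hcont s).continuousOn)
      intro x hx
      rw [interior_Icc] at hx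
      rw [(hderiv s x hx.1.ne').deriv]
      have : x ^ (1 / ν) < y := by
        rw [← hxsy]
        exact Real.rpow_lt_rpow hx.1.le hx.2 (by positivity)
      nlinarith [mul_pos hν1 hμ]
    have hanti : StrictAntiOn f (Set.Ici xs) := by
      apply strictAntiOn_of_deriv_neg (convex_Ici xs) ((hcont s).continuousOn)
      intro x hx
      rw [interior_Ici] at hx
      rw [(hderiv s x (lt_trans hxs0 hx).ne').deriv]
      have : y < x ^ (1 / ν) := by
        rw [← hxsy]
        exact Real.rpow_lt_rpow hxs0.le hx (by positivity)
      nlinarith [mul_pos hν1 hμ]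
    -- root A
    obtain ⟨A, hA, hfA⟩ := intermediate_value_Ioo hxs0.le ((hcont s).continuousOn)
      (show (0:ℝ) ∈ Set.Ioo (f 0) (f xs) by
        constructor
        · rw [hf0]; linarith
        · exact hfxspos)
    -- root K
    set b : ℝ := max xs ((r / μ) ^ ν) + 1 with hb
    have hbxs : xs < b := lt_of_le_of_lt (le_max_left _ _) (by rw [hb]; linarith [le_max_left xs ((r/μ)^ν)])
    have hbr : (r / μ) ^ ν < b := lt_of_le_of_lt (le_max_right _ _) (by rw [hb]; linarith [le_max_right xs ((r/μ)^ν)])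
    have hb0 : 0 < b := lt_trans hxs0 hbxs
    have hfb : f b < 0 := by
      have h1 : r / μ < b ^ (1 / ν) := by
        have h := Real.rpow_lt_rpow (by positivity : (0:ℝ) ≤ (r / μ) ^ ν) hbr
          (by positivity : (0:ℝ) < ν⁻¹)
        rwa [Real.rpow_rpow_inv (by positivity) hν.ne', ← one_div] at h
      have h2 : r < μ * b ^ (1 / ν) := by
        rw [div_lt_iff₀ hμ] at h1; linarith [h1]
      rw [hf]; dsimp only
      rw [hpow_split b hb0]
      have h3 : ν * b * r < ν * b * (μ * b ^ (1 / ν)) :=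
        mul_lt_mul_of_pos_left h2 (mul_pos hν hb0)
      nlinarith [hs]
    obtain ⟨K, hK, hfK⟩ := intermediate_value_Ioo' hbxs.le ((hcont s).continuousOn)
      (show (0:ℝ) ∈ Set.Ioo (f b) (f xs) from ⟨hfb, hfxspos⟩)
    refine ⟨A, K, hA.1, lt_trans hA.2 hK.1, hfA, hfK, ?_⟩
    intro x hx hfx
    rcases le_or_gt x xs with hle | hgt
    · left
      exact hmono.injOn ⟨hx.le, hle⟩ ⟨hA.1.le, hA.2.le⟩
        (by rw [show f x = 0 from hfx, show f A = 0 from hfA])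
    · right
      exact hanti.injOn (Set.mem_Ici.mpr hgt.le) (Set.mem_Ici.mpr hK.1.le)
        (by rw [show f x = 0 from hfx, show f K = 0 from hfK])
  · constructor
    · linarith [hfxs]
    · have h := hderiv sstar xs hxs0.ne'
      have h0 : ν * r - (ν + 1) * μ * xs ^ (1 / ν) = 0 := by
        rw [hxsy]; linarith [hkey]
      rwa [h0] at h
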